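/- Let Z be a nonempty closed convex subset of R^d, let F : R^d → R^d be μ-strongly monotone (μ > 0) and L-Lipschitz, let z* ∈ Z satisfy ⟨F(z*), w − z*⟩ ≥ 0 for all w ∈ Z, and run the extragradient iteration z^{k+1/2} = proj_Z(z^k − γ F(z^k)), z^{k+1} = proj_Z(z^k − γ F(z^{k+1/2})) from z^0 ∈ Z with stepsize γ = 1/(4L). Then for any ε > 0 with ε < ‖z^0 − z*‖², after K ≥ (8L/μ) · log(‖z^0 − z*‖²/ε) iterations it holds that ‖z^K − z*‖² ≤ ε. -/

import Mathlib

open scoped RealInnerProductSpace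

set_option maxHeartbeats 1000000

/-- the extragradient method with stepsize `γ = 1/(4L)` on a nonempty
closed convex set `Z ⊆ ℝ^d`, with a `μ`-strongly monotone `L`-Lipschitz operator `F` and
`z*` solving the variational inequality, reaches `‖z^K − z*‖² ≤ ε` after
`K ≥ (8L/μ)·log(‖z^0 − z*‖²/ε)` iterations, for any `0 < ε < ‖z^0 − z*‖²`. -/
theorem extragradient_iteration_complexity
    (d : ℕ) (Z : Set (EuclideanSpace ℝ (Fin d)))
    (hZne : Z.Nonempty) (hZcl : IsClosed Z) (hZcx : Convex ℝ Z)
    (F : EuclideanSpace ℝ (Fin d) → EuclideanSpace ℝ (Fin d))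
    (L γ μ : ℝ) (hL : 0 < L) (hμ : 0 < μ)
    (hmono : ∀ z1 z2, μ * ‖z1 - z2‖ ^ 2 ≤ ⟪F z1 - F z2, z1 - z2⟫)
    (hlip : ∀ z1 z2, ‖F z1 - F z2‖ ≤ L * ‖z1 - z2‖)
    (hγ : γ = 1 / (4 * L))
    -- `P` is the Euclidean projection onto `Z`
    (P : EuclideanSpace ℝ (Fin d) → EuclideanSpace ℝ (Fin d))
    (hP : ∀ v, P v ∈ Z ∧ ∀ w ∈ Z, ‖v - P v‖ ≤ ‖v - w‖)
    -- `z*` solves the variational inequality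
    (zs : EuclideanSpace ℝ (Fin d)) (hzs : zs ∈ Z)
    (hVI : ∀ w ∈ Z, 0 ≤ ⟪F zs, w - zs⟫)
    -- the extragradient iterates: `zh k = z^{k+1/2}`
    (z zh : ℕ → EuclideanSpace ℝ (Fin d)) (hz0 : z 0 ∈ Z)
    (hstep1 : ∀ k, zh k = P (z k - γ • F (z k)))
    (hstep2 : ∀ k, z (k + 1) = P (z k - γ • F (zh k)))
    (ε : ℝ) (hε : 0 < ε) (hεlt : ε < ‖z 0 - zs‖ ^ 2)
    (K : ℕ) (hK : (8 * L / μ) * Real.log (‖z 0 - zs‖ ^ 2 / ε) ≤ (K : ℝ)) :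
    ‖z K - zs‖ ^ 2 ≤ ε := by
  haveI : Nonempty Z := hZne.to_subtype
  have hPZ : ∀ v, P v ∈ Z := fun v => (hP v).1
  have hproj : ∀ v, ∀ w ∈ Z, ⟪v - P v, w - P v⟫ ≤ 0 := by
    intro v
    have hbdd : BddBelow (Set.range fun w : Z => ‖v - (w : EuclideanSpace ℝ (Fin d))‖) := by
      refine ⟨0, ?_⟩
      rintro x ⟨w, rfl⟩
      exact norm_nonneg _
    have hmin : ‖v - P v‖ = ⨅ w : Z, ‖v - w‖ := by
      refine le_antisymm (le_ciInf fun w => (hP v).2 w w.2) ?_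
      exact ciInf_le hbdd ⟨P v, hPZ v⟩
    exact (norm_eq_iInf_iff_real_inner_le_zero hZcx (hPZ v)).mp hmin
  have hr0 : 0 < ‖z 0 - zs‖ ^ 2 := lt_trans hε hεlt
  have hγpos : 0 < γ := by rw [hγ]; positivity
  have hμL : μ ≤ L := by
    have h1 := hmono (z 0) zs
    have h2 := real_inner_le_norm (F (z 0) - F zs) (z 0 - zs)
    have h3 := hlip (z 0) zs
    have hn : 0 ≤ ‖z 0 - zs‖ := norm_nonneg _
    nlinarith
  have hγL : γ * L = 1 / 4 := by rw [hγ]; field_simp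
  have hγμ : γ * μ = μ / (4 * L) := by rw [hγ]; field_simp
  -- per-step contraction
  have key : ∀ k, ‖z (k + 1) - zs‖ ^ 2 ≤ (1 - μ / (4 * L)) * ‖z k - zs‖ ^ 2 := by
    intro k
    have hbZ : zh k ∈ Z := by rw [hstep1]; exact hPZ _
    have hcZ : z (k + 1) ∈ Z := by rw [hstep2]; exact hPZ _
    set a := z k
    set b := zh k
    set c := z (k + 1)
    -- projection inequalities
    have h1 : ⟪a - c, zs - c⟫ - γ * ⟪F b, zs - c⟫ ≤ 0 := by
      have h := hproj (a - γ • F b) zs hzs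
      rw [← hstep2 k] at h
      have heq : a - γ • F b - c = (a - c) - γ • F b := by abel
      rw [heq, inner_sub_left, real_inner_smul_left] at h
      linarith
    have h2 : ⟪a - b, c - b⟫ - γ * ⟪F a, c - b⟫ ≤ 0 := by
      have h := hproj (a - γ • F a) c hcZ
      rw [← hstep1 k] at h
      have heq : a - γ • F a - b = (a - b) - γ • F a := by abel
      rw [heq, inner_sub_left, real_inner_smul_left] at h
      linarith
    -- norm identities
    have f1 : 2 * ⟪a - c, zs - c⟫ = ‖a - c‖ ^ 2 + ‖zs - c‖ ^ 2 - ‖a - zs‖ ^ 2 := by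
      have h := norm_sub_sq_real (a - c) (zs - c)
      have heq : (a - c) - (zs - c) = a - zs := by abel
      rw [heq] at h; linarith
    have f2 : 2 * ⟪a - b, c - b⟫ = ‖a - b‖ ^ 2 + ‖c - b‖ ^ 2 - ‖a - c‖ ^ 2 := by
      have h := norm_sub_sq_real (a - b) (c - b)
      have heq : (a - b) - (c - b) = a - c := by abel
      rw [heq] at h; linarith
    -- split inner products
    have f3 : ⟪F b, zs - c⟫ = ⟪F b, zs - b⟫ + ⟪F b - F a, b - c⟫ + ⟪F a, b - c⟫ := by
      have heq : zs - c = (zs - b) + (b - c) := by abel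
      rw [heq, inner_add_right, inner_sub_left]
      ring
    have f4 : ⟪F a, b - c⟫ = -⟪F a, c - b⟫ := by
      have heq : b - c = -(c - b) := by abel
      rw [heq, inner_neg_right]
    -- strong monotonicity + VI
    have f5 : μ * ‖b - zs‖ ^ 2 ≤ -⟪F b, zs - b⟫ := by
      have hm := hmono b zs
      have hv := hVI b hbZ
      have hsl : ⟪F b - F zs, b - zs⟫ = ⟪F b, b - zs⟫ - ⟪F zs, b - zs⟫ := by
        rw [inner_sub_left]
      have hneg : ⟪F b, b - zs⟫ = -⟪F b, zs - b⟫ := by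
        have heq : b - zs = -(zs - b) := by abel
        rw [heq, inner_neg_right]
      linarith [hm, hv, hsl, hneg]
    -- Lipschitz / Young
    have f6 : 2 * γ * ⟪F b - F a, b - c⟫ ≤ γ ^ 2 * L ^ 2 * ‖a - b‖ ^ 2 + ‖c - b‖ ^ 2 := by
      have hi := real_inner_le_norm (F b - F a) (b - c)
      have hl := hlip b a
      have hn1 : ‖b - a‖ = ‖a - b‖ := norm_sub_rev _ _
      have hn2 : ‖b - c‖ = ‖c - b‖ := norm_sub_rev _ _
      have hq : ⟪F b - F a, b - c⟫ ≤ L * ‖a - b‖ * ‖c - b‖ := by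
        calc ⟪F b - F a, b - c⟫ ≤ ‖F b - F a‖ * ‖b - c‖ := hi
          _ ≤ (L * ‖b - a‖) * ‖b - c‖ := mul_le_mul_of_nonneg_right hl (norm_nonneg _)
          _ = L * ‖a - b‖ * ‖c - b‖ := by rw [hn1, hn2]
      have hq2 := mul_le_mul_of_nonneg_left hq (le_of_lt hγpos)
      nlinarith [hq2, sq_nonneg (γ * L * ‖a - b‖ - ‖c - b‖)]
    -- ‖a - zs‖² ≤ 2‖a - b‖² + 2‖b - zs‖²
    have f7 : ‖a - zs‖ ^ 2 ≤ 2 * ‖a - b‖ ^ 2 + 2 * ‖b - zs‖ ^ 2 := by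
      have h := norm_add_sq_real (a - b) (b - zs)
      have heq : (a - b) + (b - zs) = a - zs := by abel
      rw [heq] at h
      have hi := real_inner_le_norm (a - b) (b - zs)
      nlinarith [sq_nonneg (‖a - b‖ - ‖b - zs‖)]
    -- combine
    have hcs : ‖c - zs‖ = ‖zs - c‖ := norm_sub_rev _ _
    have hcoef1 : γ ^ 2 * L ^ 2 = 1 / 16 := by nlinarith [hγL]
    have hcoef2 : 2 * γ * μ ≤ 1 / 2 := by nlinarith [hγL, hμL, hγpos]
    have hB : 0 ≤ ‖a - b‖ ^ 2 := sq_nonneg _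
    have hE : 0 ≤ ‖b - zs‖ ^ 2 := sq_nonneg _
    -- from h1, f3, f4: p1 + γ r + γ t ≤ γ q where r = -⟪F b, zs - b⟫
    rw [f3, f4] at h1
    have main : ⟪a - c, zs - c⟫ + ⟪a - b, c - b⟫ + γ * (-⟪F b, zs - b⟫)
        ≤ γ * ⟪F b - F a, b - c⟫ := by
      linarith [h1, h2]
    -- multiply by 2 and substitute norm identities
    have main2 : ‖c - zs‖ ^ 2 ≤ (1 - γ * μ) * ‖a - zs‖ ^ 2
        - (1 - γ ^ 2 * L ^ 2 - 2 * γ * μ) * ‖a - b‖ ^ 2 := by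
      have hr : γ * (μ * ‖b - zs‖ ^ 2) ≤ γ * (-⟪F b, zs - b⟫) :=
        mul_le_mul_of_nonneg_left f5 (le_of_lt hγpos)
      have hE2 : γ * μ * ‖a - zs‖ ^ 2 ≤ 2 * γ * μ * ‖a - b‖ ^ 2 + 2 * γ * μ * ‖b - zs‖ ^ 2 := by
        have hnn : 0 ≤ γ * μ := le_of_lt (mul_pos hγpos hμ)
        nlinarith [f7, mul_le_mul_of_nonneg_left f7 hnn]
      rw [hcs]
      linarith [main, f1, f2, f6, hr, hE2]
    have hcoef2' : γ * μ ≤ 1 / 4 := by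
      linarith [mul_nonneg (le_of_lt hγpos) (sub_nonneg.mpr hμL), hγL]
    have hnn : 0 ≤ (1 - γ ^ 2 * L ^ 2 - 2 * γ * μ) * ‖a - b‖ ^ 2 := by
      apply mul_nonneg _ hB
      rw [hcoef1]; linarith
    have hgoal : (1 : ℝ) - μ / (4 * L) = 1 - γ * μ := by rw [hγμ]
    rw [hgoal]
    linarith [main2, hnn]
  -- geometric decay
  set ρ : ℝ := 1 - μ / (4 * L) with hρ
  have hρ0 : 0 ≤ ρ := by
    have h1 : μ / (4 * L) ≤ 1 := by
      rw [div_le_one (by positivity)]; linarith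
    rw [hρ]
    linarith
  have hdecay : ∀ k, ‖z k - zs‖ ^ 2 ≤ ρ ^ k * ‖z 0 - zs‖ ^ 2 := by
    intro k
    induction k with
    | zero => simp
    | succ n ih =>
      calc ‖z (n + 1) - zs‖ ^ 2 ≤ ρ * ‖z n - zs‖ ^ 2 := key n
        _ ≤ ρ * (ρ ^ n * ‖z 0 - zs‖ ^ 2) := mul_le_mul_of_nonneg_left ih hρ0
        _ = ρ ^ (n + 1) * ‖z 0 - zs‖ ^ 2 := by ring
  -- exponential bound
  have hρexp : ρ ≤ Real.exp (-(μ / (4 * L))) := by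
    have := Real.add_one_le_exp (-(μ / (4 * L)))
    linarith
  have hpow : ρ ^ K ≤ Real.exp (-(μ / (4 * L)) * K) := by
    calc ρ ^ K ≤ Real.exp (-(μ / (4 * L))) ^ K := pow_le_pow_left₀ hρ0 hρexp K
      _ = Real.exp (-(μ / (4 * L)) * K) := by
          rw [← Real.exp_nat_mul]; ring_nf
  -- K large enough
  have hlogpos : 0 < Real.log (‖z 0 - zs‖ ^ 2 / ε) := by
    apply Real.log_pos
    rw [lt_div_iff₀ hε]; linarith
  have hKbig : Real.log (‖z 0 - zs‖ ^ 2 / ε) ≤ μ / (4 * L) * K := by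
    have h8 : (4 * L / μ) * Real.log (‖z 0 - zs‖ ^ 2 / ε) ≤ (K : ℝ) := by
      have h48 : (4 * L / μ) ≤ (8 * L / μ) := (div_le_div_iff_of_pos_right hμ).mpr (by linarith)
      linarith [mul_le_mul_of_nonneg_right h48 (le_of_lt hlogpos)]
    have hpos : (0 : ℝ) ≤ μ / (4 * L) := by positivity
    have hmul := mul_le_mul_of_nonneg_left h8 hpos
    have hid : μ / (4 * L) * ((4 * L / μ) * Real.log (‖z 0 - zs‖ ^ 2 / ε))
        = Real.log (‖z 0 - zs‖ ^ 2 / ε) := by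
      rw [← mul_assoc]
      rw [div_mul_div_comm]
      rw [show μ * (4 * L) / (4 * L * μ) = 1 by field_simp]
      rw [one_mul]
    linarith [hid ▸ hmul]
  have hexp : Real.exp (-(μ / (4 * L)) * K) ≤ ε / ‖z 0 - zs‖ ^ 2 := by
    have : -(μ / (4 * L)) * K ≤ Real.log (ε / ‖z 0 - zs‖ ^ 2) := by
      rw [Real.log_div (ne_of_gt hε) (ne_of_gt hr0)]
      rw [Real.log_div (ne_of_gt hr0) (ne_of_gt hε)] at hKbig
      linarith
    calc Real.exp (-(μ / (4 * L)) * K) ≤ Real.exp (Real.log (ε / ‖z 0 - zs‖ ^ 2)) :=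
        Real.exp_le_exp.mpr this
      _ = ε / ‖z 0 - zs‖ ^ 2 := Real.exp_log (by positivity)
  calc ‖z K - zs‖ ^ 2 ≤ ρ ^ K * ‖z 0 - zs‖ ^ 2 := hdecay K
    _ ≤ Real.exp (-(μ / (4 * L)) * K) * ‖z 0 - zs‖ ^ 2 :=
        mul_le_mul_of_nonneg_right hpow (le_of_lt hr0)
    _ ≤ (ε / ‖z 0 - zs‖ ^ 2) * ‖z 0 - zs‖ ^ 2 :=
        mul_le_mul_of_nonneg_right hexp (le_of_lt hr0)
    _ = ε := div_mul_cancel₀ ε (ne_of_gt hr0)
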